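/- Let p be a prime element of ℤ[i] not dividing 2 (equivalently, with odd norm). Then there exists a Gaussian integer x with p ∣ (x² - i) if and only if N(p) ≡ 1 (mod 8). In other words, i is a quadratic residue modulo an odd Gaussian prime p exactly when N(p) ≡ 1 (mod 8). -/

import Mathlib

set_option synthInstance.maxHeartbeats 1000000
set_option maxHeartbeats 1000000

noncomputable def gBasis : Module.Basis (Fin 2) ℤ GaussianInt :=
  Module.Basis.ofEquivFun
  { toFun := fun z => ![z.re, z.im]
    invFun := fun v => ⟨v 0, v 1⟩
    map_add' := by intro x y; funext j; fin_cases j <;> simp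
    map_smul' := by intro c x; funext j; fin_cases j <;> simp
    left_inv := by intro z; rfl
    right_inv := by intro v; funext j; fin_cases j <;> rfl }

instance : Module.Free ℤ GaussianInt := Module.Free.of_basis gBasis
instance : Module.Finite ℤ GaussianInt := Module.Finite.of_basis gBasis

lemma algNorm_eq (p : GaussianInt) : Algebra.norm ℤ p = p.norm := by
  rw [Algebra.norm_eq_matrix_det gBasis, Matrix.det_fin_two]
  simp [Algebra.leftMulMatrix_eq_repr_mul, gBasis, Zsqrtd.re_mul, Zsqrtd.im_mul, Zsqrtd.norm]
  change (p * ⟨1, 0⟩).re * (p * ⟨0, 1⟩).im - (p * ⟨0, 1⟩).re * (p * ⟨1, 0⟩).im = _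
  simp [Zsqrtd.re_mul, Zsqrtd.im_mul]

lemma sq_i_eq : ((⟨0, 1⟩ : GaussianInt) ^ 2) = -1 := by
  ext <;> simp [pow_two, Zsqrtd.re_mul, Zsqrtd.im_mul]

lemma mk_zero_iff (p z : GaussianInt) :
    Ideal.Quotient.mk (Ideal.span {p}) z = 0 ↔ p ∣ z := by
  rw [Ideal.Quotient.eq_zero_iff_mem, Ideal.mem_span_singleton]

lemma bridge (p : GaussianInt) :
    (∃ x : GaussianInt, p ∣ (x ^ 2 - ⟨0, 1⟩)) ↔
      ∃ y : GaussianInt ⧸ Ideal.span {p},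
        y ^ 2 = Ideal.Quotient.mk (Ideal.span {p}) ⟨0, 1⟩ := by
  constructor
  · rintro ⟨x, hx⟩
    refine ⟨Ideal.Quotient.mk _ x, ?_⟩
    have h0 : Ideal.Quotient.mk (Ideal.span {p}) (x ^ 2 - ⟨0, 1⟩) = 0 :=
      (mk_zero_iff p _).mpr hx
    rw [map_sub, map_pow, sub_eq_zero] at h0
    exact h0
  · rintro ⟨y, hy⟩
    obtain ⟨x, rfl⟩ := Ideal.Quotient.mk_surjective y
    refine ⟨x, (mk_zero_iff p _).mp ?_⟩
    rw [map_sub, map_pow, sub_eq_zero]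
    exact hy

lemma aux_sq_i {K : Type*} [Field K] [Fintype K] (j : K) (hj : j ^ 2 = -1)
    (h2 : (2 : K) ≠ 0) : (∃ y : K, y ^ 2 = j) ↔ Fintype.card K % 8 = 1 := by
  have hneg : (-1 : K) ≠ 1 := by
    intro h
    apply h2
    have : (2 : K) = 1 - (-1) := by norm_num
    rw [this, h, sub_self]
  have hchar : ringChar K ≠ 2 := by
    intro h
    haveI := ringChar.of_eq h
    exact h2 (by exact_mod_cast CharP.cast_eq_zero K 2)
  have hjne : j ≠ 0 := by
    intro h
    rw [h] at hj
    simp at hj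
  have hj4 : j ^ 4 = 1 := by
    have : j ^ 4 = (j ^ 2) ^ 2 := by ring
    rw [this, hj, neg_one_sq]
  have hord : orderOf j = 4 := by
    have h1 : ¬ j ^ 2 ^ 1 = 1 := by
      rw [pow_one, hj]; exact hneg
    have hh := orderOf_eq_prime_pow (p := 2) (n := 1) h1 (by norm_num [hj4])
    norm_num at hh
    exact hh
  have hqodd : Fintype.card K % 2 = 1 := by
    obtain ⟨n, hn1, hn2⟩ := FiniteField.card K (ringChar K)
    by_contra h
    have h2q : 2 ∣ Fintype.card K := by omega
    rw [hn2] at h2q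
    exact hchar ((Nat.prime_dvd_prime_iff_eq Nat.prime_two hn1).mp
        (Nat.prime_two.dvd_of_dvd_pow h2q)).symm
  have key : (∃ y : K, y ^ 2 = j) ↔ IsSquare j := by
    constructor
    · rintro ⟨y, hy⟩; exact ⟨y, by rw [← hy]; ring⟩
    · rintro ⟨r, hr⟩; exact ⟨r, by rw [hr]; ring⟩
  rw [key, FiniteField.isSquare_iff hchar hjne, ← orderOf_dvd_iff_pow_eq_one, hord]
  have := Fintype.card_pos (α := K)
  omega

/-- `i` is a quadratic residue modulo an odd Gaussian prime `p` exactly when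
`N(p) ≡ 1 (mod 8)`. -/
theorem stmt_3 (p : GaussianInt) (hp : Prime p) (h2 : ¬ p ∣ 2) :
    (∃ x : GaussianInt, p ∣ (x ^ 2 - ⟨0, 1⟩)) ↔ p.norm ≡ 1 [ZMOD 8] := by
  classical
  haveI hmax : (Ideal.span {p}).IsMaximal :=
    PrincipalIdealRing.isMaximal_of_irreducible hp.irreducible
  letI : Field (GaussianInt ⧸ Ideal.span {p}) := Ideal.Quotient.field _
  have hcard : Nat.card (GaussianInt ⧸ Ideal.span {p}) = p.norm.natAbs := by
    have := Ideal.absNorm_span_singleton p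
    rwa [Ideal.absNorm_apply, Submodule.cardQuot_apply, algNorm_eq] at this
  have hpos : 0 < Nat.card (GaussianInt ⧸ Ideal.span {p}) := by
    rw [hcard]
    exact Int.natAbs_pos.mpr (fun h => hp.ne_zero (GaussianInt.norm_eq_zero.mp h))
  haveI : Finite (GaussianInt ⧸ Ideal.span {p}) := (Nat.card_pos_iff.mp hpos).2
  haveI : Fintype (GaussianInt ⧸ Ideal.span {p}) := Fintype.ofFinite _
  have hsq : (Ideal.Quotient.mk (Ideal.span {p}) ⟨0, 1⟩) ^ 2 = -1 := by
    rw [← map_pow, sq_i_eq, map_neg, map_one]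
  have h2F : (2 : GaussianInt ⧸ Ideal.span {p}) ≠ 0 := by
    intro h
    apply h2
    rw [← mk_zero_iff p 2, map_ofNat]
    exact h
  have hnormq : (Fintype.card (GaussianInt ⧸ Ideal.span {p}) : ℤ) = p.norm := by
    rw [← Nat.card_eq_fintype_card, hcard]
    exact Int.natAbs_of_nonneg (GaussianInt.norm_nonneg p)
  have := (bridge p).trans (aux_sq_i _ hsq h2F)
  rw [this]
  show _ ↔ p.norm % 8 = 1 % 8
  omega
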